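/- Let D be an integral domain with quotient field K and let v_D be the v-operation of D. Then ▲^{v_D} ≤ ▲^{v_D}_D = v_{D[X]}; moreover, ▲^{v_D} = v_{D[X]} if and only if D = K (i.e., D is a field). -/

import Mathlib

/- Preliminaries: semistar operations on an integral domain `R` with quotient field `F`
(submodules of `F` over `R`), polynomial extension of semistar operations from `D`
to `D[X]` (viewed inside the quotient field `K(X) = RatFunc K` of `D[X]`). -/

open Polynomial Pointwise

set_option synthInstance.maxHeartbeats 1000000
set_option maxHeartbeats 1000000

open scoped Classical

noncomputable section

section Generic

variable (R F : Type*) [CommRing R] [Field F] [Algebra R F]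

/-- `o` is a semistar operation of `R` (on the nonzero `R`-submodules of the
quotient field `F`). -/
def IsSemistarOp (o : Submodule R F → Submodule R F) : Prop :=
  (∀ x : F, x ≠ 0 → ∀ E : Submodule R F, E ≠ ⊥ → o (x • E) = x • o E) ∧
  (∀ E G : Submodule R F, E ≠ ⊥ → G ≠ ⊥ → E ≤ G → o E ≤ o G) ∧
  (∀ E : Submodule R F, E ≠ ⊥ → E ≤ o E) ∧
  (∀ E : Submodule R F, E ≠ ⊥ → o (o E) = o E)

/-- The finite-type operation `⋆_f` associated to `⋆`:
`E^{⋆_f} = ⋃ { G^⋆ : G nonzero finitely generated, G ⊆ E }`. -/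
def finTypeFun (o : Submodule R F → Submodule R F) : Submodule R F → Submodule R F :=
  fun E => ⨆ (G : Submodule R F) (_ : G ≠ ⊥) (_ : G.FG) (_ : G ≤ E), o G

/-- `⋆` is of finite type, i.e. `⋆ = ⋆_f`. -/
def IsFiniteTypeFun (o : Submodule R F → Submodule R F) : Prop :=
  ∀ E : Submodule R F, E ≠ ⊥ → o E = finTypeFun R F o E

/-- `⋆` is stable: `(E ∩ G)^⋆ = E^⋆ ∩ G^⋆`. -/
def IsStableFun (o : Submodule R F → Submodule R F) : Prop :=
  ∀ E G : Submodule R F, E ≠ ⊥ → G ≠ ⊥ → o (E ⊓ G) = o E ⊓ o G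

/-- An ideal of `R` viewed as an `R`-submodule of `F`. -/
def idealSub (J : Ideal R) : Submodule R F := Submodule.map (Algebra.linearMap R F) J

/-- `(E : J) = { x ∈ F : xJ ⊆ E }` for an ideal `J` of `R`. -/
def colonIdeal (E : Submodule R F) (J : Ideal R) : Submodule R F where
  carrier := { x : F | ∀ a ∈ J, a • x ∈ E }
  add_mem' := fun {x y} hx hy a ha => by
    simpa [smul_add] using E.add_mem (hx a ha) (hy a ha)
  zero_mem' := fun a _ => by simpa using E.zero_mem
  smul_mem' := fun r x hx a ha => by
    rw [← mul_smul, mul_comm, mul_smul]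
    exact E.smul_mem r (hx a ha)

/-- The stable finite-type operation `tilde ⋆` associated to `⋆`:
`E^{tilde ⋆} = ⋃ { (E : J) : J nonzero finitely generated integral ideal with J^⋆ = R^⋆ }`. -/
def tildeFun (o : Submodule R F → Submodule R F) : Submodule R F → Submodule R F :=
  fun E => ⨆ (J : Ideal R) (_ : J ≠ ⊥) (_ : J.FG)
    (_ : o (idealSub R F J) = o (1 : Submodule R F)), colonIdeal R F E J

/-- The `v`-operation: `E^v = (R : (R : E))` for `E` a nonzero fractional ideal,
and `E^v = F` otherwise. -/
def vFun : Submodule R F → Submodule R F := fun E =>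
  if ∃ d : R, d ≠ 0 ∧ ∀ x ∈ E, d • x ∈ (1 : Submodule R F) then
    (1 : Submodule R F) / ((1 : Submodule R F) / E)
  else ⊤

/-- The `eab` operation `⋆_a` associated to `⋆`. -/
def aFun (o : Submodule R F → Submodule R F) : Submodule R F → Submodule R F := fun E =>
  ⨆ (G : Submodule R F) (_ : G ≠ ⊥) (_ : G.FG) (_ : G ≤ E),
    ⨆ (H : Submodule R F) (_ : H ≠ ⊥) (_ : H.FG), o (G * H) / o H

/-- `I` is a quasi-`⋆`-ideal: a nonzero integral ideal with `I^⋆ ∩ R = I`. -/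
def isQuasiIdealFun (o : Submodule R F → Submodule R F) (I : Ideal R) : Prop :=
  I ≠ ⊥ ∧ (o (idealSub R F I)).comap (Algebra.linearMap R F) = I

/-- `I` is a quasi-`⋆`-maximal ideal: maximal among proper quasi-`⋆`-ideals. -/
def isQuasiMaximalFun (o : Submodule R F → Submodule R F) (I : Ideal R) : Prop :=
  isQuasiIdealFun R F o I ∧ I ≠ ⊤ ∧
    ∀ J : Ideal R, isQuasiIdealFun R F o J → J ≠ ⊤ → I ≤ J → I = J

/-- The `v`-operation relative to an overring `R'` (an `R`-submodule of `F`):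
`B ↦ (R' : (R' : B))` for `B` a nonzero fractional ideal of `R'`, `F` otherwise. -/
def vRelFun (R' B : Submodule R F) : Submodule R F :=
  if ∃ z ∈ R', z ≠ 0 ∧ ∀ x ∈ B, z * x ∈ R' then R' / (R' / B) else ⊤

/-- The `t`-operation relative to an overring `R'`: finite-type operation associated to
the `v`-operation of `R'` (the union being over nonzero finitely generated
`R'`-submodules contained in `B`). -/
def tRelFun (R' B : Submodule R F) : Submodule R F :=
  ⨆ (G : Submodule R F) (_ : G ≠ ⊥)
    (_ : ∃ S : Finset F, G = R' * Submodule.span R (S : Set F)) (_ : G ≤ B),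
    vRelFun R F R' G

end Generic

section Poly

variable (D K : Type*) [CommRing D] [IsDomain D] [Field K] [Algebra D K] [IsFractionRing D K]

/-- The canonical ring homomorphism `D[X] → K(X)`. -/
def polyToRF : Polynomial D →+* RatFunc K :=
  (algebraMap (Polynomial K) (RatFunc K)).comp (Polynomial.mapRingHom (algebraMap D K))

/-- `K(X)` is an algebra over `D[X]`; in fact it is the quotient field of `D[X]`. -/
instance (priority := 100) : Algebra (Polynomial D) (RatFunc K) := (polyToRF D K).toAlgebra

/-- For a `D`-submodule `E` of `K`, the `D[X]`-submodule `E[X]` of `K(X)`: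
polynomials all of whose coefficients lie in `E`. -/
def polyExt (E : Submodule D K) : Submodule (Polynomial D) (RatFunc K) where
  carrier := { f : RatFunc K | ∃ p : Polynomial K, (∀ n, p.coeff n ∈ E) ∧
      f = algebraMap (Polynomial K) (RatFunc K) p }
  add_mem' := by
    rintro f g ⟨p, hp, rfl⟩ ⟨q, hq, rfl⟩
    exact ⟨p + q, fun n => by simpa using E.add_mem (hp n) (hq n), by simp⟩
  zero_mem' := ⟨0, fun n => by simpa using E.zero_mem, by simp⟩
  smul_mem' := by
    rintro c f ⟨p, hp, rfl⟩
    refine ⟨Polynomial.map (algebraMap D K) c * p, fun n => ?_, ?_⟩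
    · rw [Polynomial.coeff_mul]
      refine Submodule.sum_mem E fun ij _ => ?_
      rw [Polynomial.coeff_map, ← Algebra.smul_def]
      exact E.smul_mem _ (hp ij.2)
    · rw [Algebra.smul_def, RingHom.algebraMap_toAlgebra, map_mul]
      unfold polyToRF
      simp

/-- The contraction `B ∩ K` of a `D[X]`-submodule `B` of `K(X)` to a `D`-submodule of `K`. -/
def contractToBase (B : Submodule (Polynomial D) (RatFunc K)) : Submodule D K where
  carrier := { x : K | algebraMap K (RatFunc K) x ∈ B }
  add_mem' := fun {x y} hx hy => by
    simpa [Set.mem_setOf_eq, map_add] using B.add_mem hx hy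
  zero_mem' := by simpa using B.zero_mem
  smul_mem' := fun d x hx => by
    have h : algebraMap K (RatFunc K) (d • x)
        = (Polynomial.C d : Polynomial D) • (algebraMap K (RatFunc K) x) := by
      rw [Algebra.smul_def d x, map_mul, Algebra.smul_def, RingHom.algebraMap_toAlgebra]
      unfold polyToRF
      simp only [RingHom.coe_comp, Function.comp_apply, Polynomial.coe_mapRingHom,
        Polynomial.map_C, RatFunc.algebraMap_C, RatFunc.algebraMap_eq_C]
    show algebraMap K (RatFunc K) (d • x) ∈ B
    rw [h]
    exact B.smul_mem (Polynomial.C d) hx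

/-- The content `c_D(S)`: the `D`-submodule of `K` generated by the coefficients of all
polynomials belonging to `S`. -/
def contentOf (S : Set (RatFunc K)) : Submodule D K :=
  Submodule.span D { x : K | ∃ p : Polynomial K,
    algebraMap (Polynomial K) (RatFunc K) p ∈ S ∧ ∃ n, p.coeff n = x }

/-- The semistar operation `▲^⋆_T` of `D[X]` associated to a semistar operation `⋆` of `D`
and an overring `T` of `D`:
`A ↦ ⋂ { z⁻¹ (c_D(zA))^⋆[X] : z ∈ (T[X] : A), z ≠ 0 }` if `(T[X] : A) ≠ 0`, else `A ↦ K(X)`. -/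
def bigTriT (o : Submodule D K → Submodule D K) (T : Subalgebra D K) :
    Submodule (Polynomial D) (RatFunc K) → Submodule (Polynomial D) (RatFunc K) := fun A =>
  if ∃ z : RatFunc K, z ≠ 0 ∧ ∀ a ∈ A, z * a ∈ polyExt D K (Subalgebra.toSubmodule T) then
    ⨅ (z : RatFunc K) (_ : z ≠ 0) (_ : ∀ a ∈ A, z * a ∈ polyExt D K (Subalgebra.toSubmodule T)),
      z⁻¹ • polyExt D K (o (contentOf D K (z • (A : Set (RatFunc K)))))
  else ⊤

/-- `▲^⋆ := ▲^⋆_K`, the largest strict extension of `⋆` to `D[X]`. -/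
def bigTri (o : Submodule D K → Submodule D K) :
    Submodule (Polynomial D) (RatFunc K) → Submodule (Polynomial D) (RatFunc K) :=
  bigTriT D K o ⊤

/-- `b` is an extension of `⋆` to `D[X]` : `E^⋆ = (E[X])^b ∩ K`. -/
def IsExtensionFun (o : Submodule D K → Submodule D K)
    (b : Submodule (Polynomial D) (RatFunc K) → Submodule (Polynomial D) (RatFunc K)) : Prop :=
  ∀ E : Submodule D K, E ≠ ⊥ → o E = contractToBase D K (b (polyExt D K E))

/-- `b` is a strict extension of `⋆` to `D[X]` : `(E[X])^b = E^⋆[X]`. -/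
def IsStrictExtensionFun (o : Submodule D K → Submodule D K)
    (b : Submodule (Polynomial D) (RatFunc K) → Submodule (Polynomial D) (RatFunc K)) : Prop :=
  ∀ E : Submodule D K, E ≠ ⊥ → b (polyExt D K E) = polyExt D K (o E)

/-- `⋏^⋆ : A ↦ ⋂ { A^★ : ★ a semistar operation of D[X] extending ⋆ }`. -/
def curlyFun (o : Submodule D K → Submodule D K) :
    Submodule (Polynomial D) (RatFunc K) → Submodule (Polynomial D) (RatFunc K) := fun A =>
  ⨅ (b : Submodule (Polynomial D) (RatFunc K) → Submodule (Polynomial D) (RatFunc K))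
    (_ : IsSemistarOp (Polynomial D) (RatFunc K) b) (_ : IsExtensionFun D K o b), b A

/-- The localization `D_Q` of `D` at a prime ideal `Q`, as a `D`-submodule of `K`. -/
def locSub (Q : Ideal D) : Submodule D K :=
  Submodule.span D { x : K | ∃ s : D, s ∉ Q ∧ s • x ∈ (1 : Submodule D K) }

/-- The content of an ideal `I` of `D[X]`: the `D`-submodule of `K` generated by the
coefficients of the polynomials in `I`. -/
def contentOfIdeal (I : Ideal (Polynomial D)) : Submodule D K :=
  Submodule.span D { x : K | ∃ p ∈ I, ∃ n, algebraMap D K (Polynomial.coeff p n) = x }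

/-- The Nagata ring `D_Q(X)`, as a subset of `K(X)`: fractions `f/g` with
`f, g ∈ D_Q[X]` and the coefficients of `g` generating the unit ideal of `D_Q`. -/
def nagataSet (Q : Ideal D) : Set (RatFunc K) :=
  { u : RatFunc K | ∃ g : Polynomial K, (∀ n, g.coeff n ∈ locSub D K Q) ∧
      locSub D K Q * Submodule.span D { x : K | ∃ n, g.coeff n = x } = locSub D K Q ∧
      u * algebraMap (Polynomial K) (RatFunc K) g ∈ polyExt D K (locSub D K Q) }

end Poly


section ProofHelpers

variable (D K : Type*) [CommRing D] [IsDomain D] [Field K] [Algebra D K] [IsFractionRing D K]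

lemma algebraMap_polyD_eq : algebraMap (Polynomial D) (RatFunc K) = polyToRF D K :=
  rfl

lemma polyToRF_apply (p : Polynomial D) :
    polyToRF D K p = algebraMap (Polynomial K) (RatFunc K) (p.map (algebraMap D K)) := rfl

lemma polyToRF_injective : Function.Injective (polyToRF D K) := by
  intro p q h
  have h2 : p.map (algebraMap D K) = q.map (algebraMap D K) :=
    RatFunc.algebraMap_injective K h
  exact Polynomial.map_injective _ (IsFractionRing.injective D K) h2

lemma polyExt_mono {E G : Submodule D K} (h : E ≤ G) : polyExt D K E ≤ polyExt D K G := by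
  rintro f ⟨p, hp, rfl⟩
  exact ⟨p, fun n => h (hp n), rfl⟩

lemma polyExt_one : polyExt D K (1 : Submodule D K) = (1 : Submodule (Polynomial D) (RatFunc K)) := by
  ext f
  rw [Submodule.mem_one]
  constructor
  · rintro ⟨p, hp, rfl⟩
    have hcf : ∀ n, p.coeff n ∈ Set.range (algebraMap D K) := by
      intro n
      rcases Submodule.mem_one.mp (hp n) with ⟨y, hy⟩
      exact ⟨y, hy⟩
    obtain ⟨q, hq⟩ := (Polynomial.mem_lifts _).mp ((Polynomial.lifts_iff_coeff_lifts p).mpr hcf)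
    exact ⟨q, by rw [algebraMap_polyD_eq, polyToRF_apply, hq]⟩
  · rintro ⟨q, rfl⟩
    refine ⟨q.map (algebraMap D K), fun n => ?_, rfl⟩
    rw [Polynomial.coeff_map]
    exact Submodule.mem_one.mpr ⟨q.coeff n, rfl⟩

lemma mem_inv_smul_iff {z w : RatFunc K} (hz : z ≠ 0)
    (M : Submodule (Polynomial D) (RatFunc K)) :
    w ∈ z⁻¹ • M ↔ z * w ∈ M := by
  have hmem : (w ∈ z⁻¹ • M) ↔ ∃ m ∈ (M : Set (RatFunc K)), z⁻¹ • m = w := by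
    rw [← SetLike.mem_coe, Submodule.coe_pointwise_smul]
    exact Set.mem_smul_set
  rw [hmem]
  constructor
  · rintro ⟨m, hm, rfl⟩
    rwa [smul_eq_mul, mul_inv_cancel_left₀ hz]
  · intro h
    exact ⟨z * w, h, by rw [smul_eq_mul, inv_mul_cancel_left₀ hz]⟩

lemma smul_poly_eq_C_mul (c : D) (p : Polynomial K) :
    (c • p : Polynomial K) = Polynomial.C (algebraMap D K c) * p := by
  ext n
  rw [Polynomial.coeff_smul, Polynomial.coeff_C_mul, Algebra.smul_def]

lemma exists_poly_denom (z : RatFunc K) :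
    ∃ f g : Polynomial D, g ≠ 0 ∧ z * polyToRF D K g = polyToRF D K f := by
  obtain ⟨b, hb⟩ := IsLocalization.integerNormalization_map_to_map (nonZeroDivisors D) z.num
  obtain ⟨c, hc⟩ := IsLocalization.integerNormalization_map_to_map (nonZeroDivisors D) z.denom
  refine ⟨Polynomial.C c.1 * IsLocalization.integerNormalization (nonZeroDivisors D) z.num,
    Polynomial.C b.1 * IsLocalization.integerNormalization (nonZeroDivisors D) z.denom, ?_, ?_⟩
  · have hb0 : (b : D) ≠ 0 := nonZeroDivisors.ne_zero b.2
    have hG0 : IsLocalization.integerNormalization (nonZeroDivisors D) z.denom ≠ 0 := fun h0 =>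
      RatFunc.denom_ne_zero z (IsFractionRing.integerNormalization_eq_zero_iff.mp h0)
    exact mul_ne_zero (fun h => hb0 (Polynomial.C_eq_zero.mp h)) hG0
  · have hdenne : algebraMap (Polynomial K) (RatFunc K) z.denom ≠ 0 :=
      RatFunc.algebraMap_ne_zero (RatFunc.denom_ne_zero z)
    have hzden : z * algebraMap (Polynomial K) (RatFunc K) z.denom
        = algebraMap (Polynomial K) (RatFunc K) z.num :=
      (eq_div_iff hdenne).mp (RatFunc.num_div_denom z).symm
    rw [polyToRF_apply, polyToRF_apply, Polynomial.map_mul, Polynomial.map_mul,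
      Polynomial.map_C, Polynomial.map_C, hb, hc, smul_poly_eq_C_mul, smul_poly_eq_C_mul]
    simp only [map_mul]
    linear_combination (algebraMap (Polynomial K) (RatFunc K) (Polynomial.C (algebraMap D K b.1))
      * algebraMap (Polynomial K) (RatFunc K) (Polynomial.C (algebraMap D K c.1))) * hzden

lemma cond_iff (A : Submodule (Polynomial D) (RatFunc K)) :
    (∃ z : RatFunc K, z ≠ 0 ∧ ∀ a ∈ A,
        z * a ∈ polyExt D K (Subalgebra.toSubmodule (⊥ : Subalgebra D K))) ↔
    (∃ d : Polynomial D, d ≠ 0 ∧ ∀ x ∈ A, d • x ∈ (1 : Submodule (Polynomial D) (RatFunc K))) := by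
  rw [Algebra.toSubmodule_bot, polyExt_one]
  constructor
  · rintro ⟨z, hz, hzA⟩
    obtain ⟨f, g, hg, hfg⟩ := exists_poly_denom D K z
    have hgne : polyToRF D K g ≠ 0 := fun h => hg (polyToRF_injective D K (by rw [h, map_zero]))
    refine ⟨f, ?_, ?_⟩
    · intro hf0
      rw [hf0, map_zero] at hfg
      exact hz (by
        have := mul_eq_zero.mp hfg
        tauto)
    · intro x hx
      have hfx : f • x = z * ((g : Polynomial D) • x) := by
        rw [Algebra.smul_def, Algebra.smul_def, algebraMap_polyD_eq, ← hfg]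
        ring
      rw [hfx]
      exact hzA _ (A.smul_mem g hx)
  · rintro ⟨d, hd, hdA⟩
    refine ⟨polyToRF D K d,
      fun h => hd (polyToRF_injective D K (by rw [h, map_zero])), fun a ha => ?_⟩
    rw [← algebraMap_polyD_eq, ← Algebra.smul_def]
    exact hdA a ha

lemma exists_poly_of_mem_one {f : RatFunc K}
    (h : f ∈ (1 : Submodule (Polynomial D) (RatFunc K))) :
    ∃ q : Polynomial K, (∀ n, q.coeff n ∈ (1 : Submodule D K)) ∧
      f = algebraMap (Polynomial K) (RatFunc K) q := by
  rw [← polyExt_one] at h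
  exact h

lemma coeff_mem_content {A : Submodule (Polynomial D) (RatFunc K)} {z : RatFunc K}
    {a : RatFunc K} (ha : a ∈ A) {p : Polynomial K}
    (hp : algebraMap (Polynomial K) (RatFunc K) p = z * a) (n : ℕ) :
    p.coeff n ∈ contentOf D K (z • (A : Set (RatFunc K))) := by
  apply Submodule.subset_span
  refine ⟨p, ?_, n, rfl⟩
  rw [hp, ← smul_eq_mul]
  exact Set.smul_mem_smul_set ha

lemma content_le_one {A : Submodule (Polynomial D) (RatFunc K)} {z : RatFunc K}
    (hzA : ∀ a ∈ A, z * a ∈ (1 : Submodule (Polynomial D) (RatFunc K))) :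
    contentOf D K (z • (A : Set (RatFunc K))) ≤ 1 := by
  apply Submodule.span_le.mpr
  rintro x ⟨p, hpmem, n, rfl⟩
  rcases Set.mem_smul_set.mp hpmem with ⟨a, ha, hza⟩
  rw [smul_eq_mul] at hza
  obtain ⟨q, hq, heq⟩ := exists_poly_of_mem_one D K (hzA a ha)
  have hpq : p = q := RatFunc.algebraMap_injective K (by rw [← hza, heq])
  rw [hpq]
  exact hq n

lemma vFun_le_one {E : Submodule D K} (hE : E ≤ 1) : vFun D K E ≤ 1 := by
  rw [vFun, if_pos ⟨(1 : D), one_ne_zero, fun x hx => by simpa using hE hx⟩]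
  intro y hy
  have h1 : (1 : K) ∈ (1 : Submodule D K) / E :=
    Submodule.mem_div_iff_forall_mul_mem.mpr (fun x hx => by simpa using hE hx)
  simpa using Submodule.mem_div_iff_forall_mul_mem.mp hy 1 h1

lemma bigTriT_bot_eq (A : Submodule (Polynomial D) (RatFunc K)) :
    bigTriT D K (vFun D K) ⊥ A = vFun (Polynomial D) (RatFunc K) A := by
  by_cases h : ∃ d : Polynomial D, d ≠ 0 ∧ ∀ x ∈ A, d • x ∈ (1 : Submodule (Polynomial D) (RatFunc K))
  · rw [bigTriT, if_pos ((cond_iff D K A).mpr h), vFun, if_pos h]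
    apply le_antisymm
    · -- bigTriT ≤ 1 / (1 / A)
      intro w hw
      rw [Submodule.mem_div_iff_forall_mul_mem]
      intro u hu
      by_cases hu0 : u = 0
      · rw [hu0, mul_zero]; exact Submodule.zero_mem _
      · have hu1 : ∀ a ∈ A, u * a ∈ (1 : Submodule (Polynomial D) (RatFunc K)) :=
          fun a ha => Submodule.mem_div_iff_forall_mul_mem.mp hu a ha
        have hu' : ∀ a ∈ A, u * a ∈ polyExt D K (Subalgebra.toSubmodule (⊥ : Subalgebra D K)) := by
          rw [Algebra.toSubmodule_bot, polyExt_one]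
          exact hu1
        have hw2 := (Submodule.mem_iInf _).mp ((Submodule.mem_iInf _).mp
          ((Submodule.mem_iInf _).mp hw u) hu0) hu'
        have h2 : u * w ∈
            polyExt D K (vFun D K (contentOf D K (u • (A : Set (RatFunc K))))) :=
          (mem_inv_smul_iff D K hu0 _).mp hw2
        have hle : vFun D K (contentOf D K (u • (A : Set (RatFunc K)))) ≤ 1 :=
          vFun_le_one D K (content_le_one D K hu1)
        rw [mul_comm, ← polyExt_one]
        exact polyExt_mono D K hle h2
    · -- 1 / (1 / A) ≤ bigTriT
      apply le_iInf; intro z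
      apply le_iInf; intro hz
      apply le_iInf; intro hzA
      intro w hw
      have hzA1 : ∀ a ∈ A, z * a ∈ (1 : Submodule (Polynomial D) (RatFunc K)) := by
        intro a ha
        have := hzA a ha
        rwa [Algebra.toSubmodule_bot, polyExt_one] at this
      rw [mem_inv_smul_iff D K hz]
      have hzdiv : z ∈ (1 : Submodule (Polynomial D) (RatFunc K)) / A :=
        Submodule.mem_div_iff_forall_mul_mem.mpr hzA1
      have hzw : z * w ∈ (1 : Submodule (Polynomial D) (RatFunc K)) := by
        rw [mul_comm]
        exact Submodule.mem_div_iff_forall_mul_mem.mp hw z hzdiv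
      obtain ⟨q, hq, heq⟩ := exists_poly_of_mem_one D K hzw
      refine ⟨q, fun n => ?_, heq⟩
      have hcle : contentOf D K (z • (A : Set (RatFunc K))) ≤ 1 := content_le_one D K hzA1
      rw [vFun, if_pos ⟨(1 : D), one_ne_zero, fun x hx => by simpa using hcle hx⟩]
      rw [Submodule.mem_div_iff_forall_mul_mem]
      intro u hu
      -- u ∈ 1 / content; show q.coeff n * u ∈ 1
      have hukey : ∀ a ∈ A, (algebraMap K (RatFunc K) u * z) * a ∈
          (1 : Submodule (Polynomial D) (RatFunc K)) := by
        intro a ha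
        obtain ⟨p, hpc, hpe⟩ := exists_poly_of_mem_one D K (hzA1 a ha)
        have hcoef : ∀ m, p.coeff m ∈ contentOf D K (z • (A : Set (RatFunc K))) :=
          coeff_mem_content D K ha hpe.symm
        rw [← polyExt_one]
        refine ⟨Polynomial.C u * p, fun m => ?_, ?_⟩
        · rw [Polynomial.coeff_C_mul]
          exact Submodule.mem_div_iff_forall_mul_mem.mp hu _ (hcoef m)
        · rw [map_mul, RatFunc.algebraMap_C, ← hpe, RatFunc.algebraMap_eq_C]
          ring
      have huz : algebraMap K (RatFunc K) u * z ∈ (1 : Submodule (Polynomial D) (RatFunc K)) / A :=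
        Submodule.mem_div_iff_forall_mul_mem.mpr hukey
      have hfin : w * (algebraMap K (RatFunc K) u * z) ∈ (1 : Submodule (Polynomial D) (RatFunc K)) :=
        Submodule.mem_div_iff_forall_mul_mem.mp hw _ huz
      have heq2 : w * (algebraMap K (RatFunc K) u * z)
          = algebraMap (Polynomial K) (RatFunc K) (Polynomial.C u * q) := by
        rw [map_mul, RatFunc.algebraMap_C, ← heq, RatFunc.algebraMap_eq_C]
        ring
      rw [heq2] at hfin
      obtain ⟨r, hr, hre⟩ := exists_poly_of_mem_one D K hfin
      have : Polynomial.C u * q = r := RatFunc.algebraMap_injective K hre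
      have hcoeff := hr n
      rw [← this, Polynomial.coeff_C_mul] at hcoeff
      rwa [mul_comm]
  · rw [bigTriT, if_neg (fun hc => h ((cond_iff D K A).mp hc)), vFun, if_neg h]

lemma bigTri_le_bot (A : Submodule (Polynomial D) (RatFunc K)) :
    bigTri D K (vFun D K) A ≤ bigTriT D K (vFun D K) ⊥ A := by
  rw [bigTri, bigTriT, bigTriT]
  by_cases h : ∃ z : RatFunc K, z ≠ 0 ∧ ∀ a ∈ A,
      z * a ∈ polyExt D K (Subalgebra.toSubmodule (⊥ : Subalgebra D K))
  · rw [if_pos h]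
    have hmono : polyExt D K (Subalgebra.toSubmodule (⊥ : Subalgebra D K))
        ≤ polyExt D K (Subalgebra.toSubmodule (⊤ : Subalgebra D K)) :=
      polyExt_mono D K (by rw [Algebra.top_toSubmodule]; exact le_top)
    have h' : ∃ z : RatFunc K, z ≠ 0 ∧ ∀ a ∈ A,
        z * a ∈ polyExt D K (Subalgebra.toSubmodule (⊤ : Subalgebra D K)) := by
      obtain ⟨z, hz, hzA⟩ := h
      exact ⟨z, hz, fun a ha => hmono (hzA a ha)⟩
    rw [if_pos h']
    apply le_iInf; intro z
    apply le_iInf; intro hz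
    apply le_iInf; intro hzA
    exact iInf_le_of_le z (iInf_le_of_le hz
      (iInf_le_of_le (fun a ha => hmono (hzA a ha)) le_rfl))
  · rw [if_neg h]
    exact le_top

lemma algebraMap_surjective_of_isField (hD : IsField D) :
    Function.Surjective (algebraMap D K) := by
  intro x
  obtain ⟨a, b, hb, hx⟩ := IsFractionRing.div_surjective (A := D) x
  have hb0 : b ≠ 0 := nonZeroDivisors.ne_zero hb
  obtain ⟨c, hc⟩ := hD.mul_inv_cancel hb0
  refine ⟨a * c, ?_⟩
  have hbK : algebraMap D K b ≠ 0 :=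
    fun h => hb0 (IsFractionRing.injective D K (by rw [h, map_zero]))
  have hcK : algebraMap D K c = (algebraMap D K b)⁻¹ := by
    field_simp
    rw [← map_mul, mul_comm c b, hc, map_one]
  rw [map_mul, hcK, ← hx]
  field_simp

lemma isField_of_surjective (hs : Function.Surjective (algebraMap D K)) : IsField D := by
  refine ⟨exists_pair_ne D, mul_comm, ?_⟩
  intro a ha
  obtain ⟨b, hb⟩ := hs (algebraMap D K a)⁻¹
  refine ⟨b, IsFractionRing.injective D K ?_⟩
  rw [map_mul, hb, map_one, mul_inv_cancel₀]
  exact fun h => ha (IsFractionRing.injective D K (by rw [h, map_zero]))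

lemma not_mem_polyExt_inv_X (E : Submodule D K) :
    (algebraMap (Polynomial K) (RatFunc K) Polynomial.X)⁻¹ ∉ polyExt D K E := by
  rintro ⟨p, hp, heq⟩
  have hX : algebraMap (Polynomial K) (RatFunc K) Polynomial.X ≠ 0 :=
    RatFunc.algebraMap_ne_zero Polynomial.X_ne_zero
  have : algebraMap (Polynomial K) (RatFunc K) (p * Polynomial.X) = 1 := by
    rw [map_mul, ← heq, inv_mul_cancel₀ hX]
  have hPX : p * Polynomial.X = 1 := by
    apply RatFunc.algebraMap_injective K
    rw [this, map_one]
  exact Polynomial.not_isUnit_X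
    (IsUnit.of_mul_eq_one p (by rw [mul_comm]; exact hPX))

end ProofHelpers

/- The theorem. -/

theorem bigTri_v_le_vPoly (D K : Type*) [CommRing D] [IsDomain D] [Field K] [Algebra D K] [IsFractionRing D K] :
    (∀ A : Submodule (Polynomial D) (RatFunc K), A ≠ ⊥ →
      bigTri D K (vFun D K) A ≤ bigTriT D K (vFun D K) ⊥ A) ∧
    (∀ A : Submodule (Polynomial D) (RatFunc K), A ≠ ⊥ →
      bigTriT D K (vFun D K) ⊥ A = vFun (Polynomial D) (RatFunc K) A) ∧
    ((∀ A : Submodule (Polynomial D) (RatFunc K), A ≠ ⊥ →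
      bigTri D K (vFun D K) A = vFun (Polynomial D) (RatFunc K) A) ↔ IsField D) := by
  refine ⟨fun A _ => bigTri_le_bot D K A, fun A _ => bigTriT_bot_eq D K A, ?_⟩
  constructor
  · intro heq
    set A := polyExt D K (⊤ : Submodule D K) with hAdef
    have h1A : (1 : RatFunc K) ∈ A := ⟨1, fun n => trivial, by rw [map_one]⟩
    have hA : A ≠ ⊥ := by
      intro h
      rw [h] at h1A
      simp only [Submodule.mem_bot] at h1A
      exact one_ne_zero h1A
    have hkey := heq A hA
    have hcond : ∃ z : RatFunc K, z ≠ 0 ∧ ∀ a ∈ A,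
        z * a ∈ polyExt D K (Subalgebra.toSubmodule (⊤ : Subalgebra D K)) := by
      refine ⟨1, one_ne_zero, fun a ha => ?_⟩
      rw [Algebra.top_toSubmodule, one_mul]
      exact ha
    have hle : bigTri D K (vFun D K) A ≤
        polyExt D K (vFun D K (contentOf D K ((1 : RatFunc K) • (A : Set (RatFunc K))))) := by
      have step : bigTri D K (vFun D K) A ≤ (1 : RatFunc K)⁻¹ •
          polyExt D K (vFun D K (contentOf D K ((1 : RatFunc K) • (A : Set (RatFunc K))))) := by
        rw [bigTri, bigTriT, if_pos hcond]
        exact iInf_le_of_le 1 (iInf_le_of_le one_ne_zero (iInf_le_of_le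
          (fun a ha => by rw [Algebra.top_toSubmodule, one_mul]; exact ha) le_rfl))
      rwa [inv_one, one_smul] at step
    by_cases hc : ∃ d : Polynomial D, d ≠ 0 ∧ ∀ x ∈ A,
        d • x ∈ (1 : Submodule (Polynomial D) (RatFunc K))
    · obtain ⟨d, hd, hdA⟩ := hc
      apply isField_of_surjective D K
      have hex : ∃ n, d.coeff n ≠ 0 := by
        by_contra hno
        push_neg at hno
        exact hd (Polynomial.ext fun n => by simpa using hno n)
      obtain ⟨n, hn⟩ := hex
      have hdn : algebraMap D K (d.coeff n) ≠ 0 :=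
        fun h => hn (IsFractionRing.injective D K (by rw [h, map_zero]))
      intro y
      set t := y / algebraMap D K (d.coeff n) with ht
      have hxt : algebraMap (Polynomial K) (RatFunc K) (Polynomial.C t) ∈ A :=
        ⟨Polynomial.C t, fun m => trivial, rfl⟩
      have h1 := hdA _ hxt
      rw [Algebra.smul_def, algebraMap_polyD_eq, polyToRF_apply, ← map_mul] at h1
      obtain ⟨q, hq, hqe⟩ := exists_poly_of_mem_one D K h1
      have hpq : d.map (algebraMap D K) * Polynomial.C t = q :=
        RatFunc.algebraMap_injective K hqe
      have hmem := hq n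
      rw [← hpq, Polynomial.coeff_mul_C, Polynomial.coeff_map] at hmem
      rcases Submodule.mem_one.mp hmem with ⟨e, he⟩
      refine ⟨e, ?_⟩
      rw [he, ht]
      field_simp
    · exfalso
      have hvA : vFun (Polynomial D) (RatFunc K) A = ⊤ := by rw [vFun, if_neg hc]
      have hmem : (algebraMap (Polynomial K) (RatFunc K) Polynomial.X)⁻¹ ∈
          bigTri D K (vFun D K) A := by
        rw [hkey, hvA]
        trivial
      exact not_mem_polyExt_inv_X D K _ (hle hmem)
  · intro hD A _
    have hsurj := algebraMap_surjective_of_isField D K hD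
    have hbot : (⊤ : Subalgebra D K) = ⊥ :=
      le_antisymm (fun x _ => Algebra.mem_bot.mpr (hsurj x)) le_top
    rw [bigTri, hbot]
    exact bigTriT_bot_eq D K A
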